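/- Let {(X_n, M_n, ∗)}_{n∈ℕ} be a sequence of nonempty compact non-Archimedean fuzzy metric spaces satisfying conditions (1)–(4) of the fuzzy precompactness theorem: (1) ∗ satisfies (TN1); (2) there is a nondecreasing left-continuous C : (0,∞) → (0,1] with 0 < C(s) ≤ diam_s(X_n) for all s > 0 and all n; (3) for every t > 0 and 0 < ε < 1 there is N(ε,t) with cov(X_n,ε,t) ≤ N(ε,t) for all n; (4) for every t > 0 and 0 < ε < 1, with N = N(ε,t), there exist (t,ε)-nets {x_i^n}_{i=1}^N in X_n such that for all n,m, all s > t and all i,j, if M_n(x_i^n,x_j^n,s) < M_m(x_i^m,x_j^m,s) then M_n(x_i^n,x_j^n,s)/(M_m(x_i^m,x_j^m,s) ∗ (1−ε)) ≥ M_n(x_i^n,x_j^n,t)/(M_m(x_i^m,x_j^m,t) ∗ (1−ε)). Then the sequence {(X_n, M_n, ∗)} has a Cauchy subsequence with respect to M_GH, i.e., a subsequence {X_{n_k}} such that for every t > 0 and 0 < ε < 1 there is k_0 with M_GH(X_{n_j}, X_{n_k}, t) > 1 − ε for all j,k ≥ k_0. -/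

import Mathlib

open Set Filter Topology

/-- A continuous t-norm on `[0,1]`. -/
structure IsContinuousTNorm (star : ℝ → ℝ → ℝ) : Prop where
  mem : ∀ a ∈ Icc (0:ℝ) 1, ∀ b ∈ Icc (0:ℝ) 1, star a b ∈ Icc (0:ℝ) 1
  comm : ∀ a ∈ Icc (0:ℝ) 1, ∀ b ∈ Icc (0:ℝ) 1, star a b = star b a
  assoc : ∀ a ∈ Icc (0:ℝ) 1, ∀ b ∈ Icc (0:ℝ) 1, ∀ c ∈ Icc (0:ℝ) 1,
    star (star a b) c = star a (star b c)
  one : ∀ a ∈ Icc (0:ℝ) 1, star a 1 = a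
  mono : ∀ a b c d : ℝ, a ∈ Icc (0:ℝ) 1 → b ∈ Icc (0:ℝ) 1 → c ∈ Icc (0:ℝ) 1 →
    d ∈ Icc (0:ℝ) 1 → a ≤ c → b ≤ d → star a b ≤ star c d
  continuous : ContinuousOn (fun p : ℝ × ℝ => star p.1 p.2) (Icc 0 1 ×ˢ Icc 0 1)

/-- A fuzzy metric in the sense of Kramosil and Michalek: `M x y t` is the degree of
nearness of `x` and `y` at time `t ≥ 0`. -/
structure IsFuzzyMetric {X : Type*} (star : ℝ → ℝ → ℝ) (M : X → X → ℝ → ℝ) : Prop where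
  range : ∀ x y t, 0 ≤ t → M x y t ∈ Icc (0:ℝ) 1
  km1 : ∀ x y, M x y 0 = 0
  km2 : ∀ x y, (∀ t, 0 < t → M x y t = 1) ↔ x = y
  km3 : ∀ x y t, M x y t = M y x t
  km4 : ∀ x y z t s, 0 < t → 0 < s → star (M x y t) (M y z s) ≤ M x z (t + s)
  km5 : ∀ x y t, 0 < t → ContinuousWithinAt (M x y) (Iio t) t

/-- A non-Archimedean fuzzy metric: (KM4) is replaced by the stronger (NA). -/
structure IsNAFuzzyMetric {X : Type*} (star : ℝ → ℝ → ℝ) (M : X → X → ℝ → ℝ) : Prop where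
  range : ∀ x y t, 0 ≤ t → M x y t ∈ Icc (0:ℝ) 1
  km1 : ∀ x y, M x y 0 = 0
  km2 : ∀ x y, (∀ t, 0 < t → M x y t = 1) ↔ x = y
  km3 : ∀ x y t, M x y t = M y x t
  na : ∀ x y z t s, 0 < t → 0 < s → star (M x y t) (M y z s) ≤ M x z (max t s)
  km5 : ∀ x y t, 0 < t → ContinuousWithinAt (M x y) (Iio t) t

/-- The open ball `B_M(x, ε, t)`. -/
def fuzzyBall {X : Type*} (M : X → X → ℝ → ℝ) (x : X) (ε t : ℝ) : Set X :=
  {y | 1 - ε < M x y t}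

/-- The topology on `X` is the one induced by the fuzzy metric `M`, i.e. the open balls
form a neighbourhood basis at every point. -/
def FuzzyCompatible {X : Type*} [TopologicalSpace X] (M : X → X → ℝ → ℝ) : Prop :=
  ∀ x : X, (nhds x).HasBasis (fun p : ℝ × ℝ => 0 < p.1 ∧ p.1 < 1 ∧ 0 < p.2)
    (fun p => fuzzyBall M x p.1 p.2)

/-- The Hausdorff fuzzy distance between two subsets of a fuzzy metric space. -/
noncomputable def fuzzyHSet {X : Type*} (M : X → X → ℝ → ℝ) (A B : Set X) (t : ℝ) : ℝ :=
  min (⨅ a : A, ⨆ b : B, M a b t) (⨅ b : B, ⨆ a : A, M a b t)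

/-- The Hausdorff fuzzy distance between the two parts of a disjoint union `X ⊕ Y`. -/
noncomputable def fuzzyH {X Y : Type*} (M : (X ⊕ Y) → (X ⊕ Y) → ℝ → ℝ) (t : ℝ) : ℝ :=
  min (⨅ x : X, ⨆ y : Y, M (Sum.inl x) (Sum.inr y) t)
    (⨅ y : Y, ⨆ x : X, M (Sum.inl x) (Sum.inr y) t)

/-- A non-Archimedean fuzzy metric on the disjoint union `X ⊕ Y` is admissible if it
restricts to the given fuzzy metrics on `X` and on `Y`. -/
def IsAdmissible {X Y : Type*} (star : ℝ → ℝ → ℝ) (MX : X → X → ℝ → ℝ)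
    (MY : Y → Y → ℝ → ℝ) (M : (X ⊕ Y) → (X ⊕ Y) → ℝ → ℝ) : Prop :=
  IsNAFuzzyMetric star M ∧
    (∀ x x' t, 0 ≤ t → M (Sum.inl x) (Sum.inl x') t = MX x x' t) ∧
    (∀ y y' t, 0 ≤ t → M (Sum.inr y) (Sum.inr y') t = MY y y' t)

/-- The non-Archimedean Gromov-Hausdorff fuzzy distance. -/
noncomputable def MGH {X Y : Type*} (star : ℝ → ℝ → ℝ) (MX : X → X → ℝ → ℝ)
    (MY : Y → Y → ℝ → ℝ) (t : ℝ) : ℝ :=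
  sSup ((fun M => fuzzyH M t) '' {M | IsAdmissible star MX MY M})

/-- The `t`-diameter of a fuzzy metric space. -/
noncomputable def fuzzyDiam {X : Type*} (M : X → X → ℝ → ℝ) (s : ℝ) : ℝ :=
  ⨅ p : X × X, M p.1 p.2 s

/-- `cov(X, ε, t) ≤ N` : `X` can be covered by at most `N` balls `B(c, ε, t)`. -/
def CovLE {X : Type*} (M : X → X → ℝ → ℝ) (ε t : ℝ) (N : ℕ) : Prop :=
  ∃ C : Finset X, C.card ≤ N ∧ ∀ x : X, ∃ c ∈ C, 1 - ε < M c x t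

/-- Property (TN1) of a t-norm: `a - a ∗ b ≥ a ∗ (1 - b)`. -/
def TN1 (star : ℝ → ℝ → ℝ) : Prop :=
  ∀ a ∈ Icc (0:ℝ) 1, ∀ b ∈ Icc (0:ℝ) 1, star a (1 - b) ≤ a - star a b

/-- The standard fuzzy metric associated to a metric space. -/
noncomputable def stdFuzzy {X : Type*} [MetricSpace X] (x y : X) (t : ℝ) : ℝ :=
  if 0 < t then t / (t + dist x y) else 0

namespace FuzzyAux

variable {star : ℝ → ℝ → ℝ}

lemma star_le_left (h : IsContinuousTNorm star) {a b : ℝ} (ha : a ∈ Icc (0:ℝ) 1)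
    (hb : b ∈ Icc (0:ℝ) 1) : star a b ≤ a := by
  have := h.mono a b a 1 ha hb ha (by norm_num) le_rfl hb.2
  simpa [h.one a ha] using this

lemma star_le_right (h : IsContinuousTNorm star) {a b : ℝ} (ha : a ∈ Icc (0:ℝ) 1)
    (hb : b ∈ Icc (0:ℝ) 1) : star a b ≤ b := by
  rw [h.comm a ha b hb]; exact star_le_left h hb ha

lemma one_star (h : IsContinuousTNorm star) {a : ℝ} (ha : a ∈ Icc (0:ℝ) 1) :
    star 1 a = a := by
  rw [h.comm 1 (by norm_num) a ha]; exact h.one a ha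

lemma star_left_comm (h : IsContinuousTNorm star) {b c d : ℝ} (hb : b ∈ Icc (0:ℝ) 1)
    (hc : c ∈ Icc (0:ℝ) 1) (hd : d ∈ Icc (0:ℝ) 1) :
    star b (star c d) = star c (star b d) := by
  rw [← h.assoc b hb c hc d hd, h.comm b hb c hc, h.assoc c hc b hb d hd]

lemma star4 (h : IsContinuousTNorm star) {a b c d : ℝ} (ha : a ∈ Icc (0:ℝ) 1)
    (hb : b ∈ Icc (0:ℝ) 1) (hc : c ∈ Icc (0:ℝ) 1) (hd : d ∈ Icc (0:ℝ) 1) :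
    star (star a b) (star c d) = star (star a c) (star b d) := by
  have hcd := h.mem c hc d hd
  have hbd := h.mem b hb d hd
  calc star (star a b) (star c d) = star a (star b (star c d)) := h.assoc a ha b hb _ hcd
    _ = star a (star c (star b d)) := by rw [star_left_comm h hb hc hd]
    _ = star (star a c) (star b d) := (h.assoc a ha c hc _ hbd).symm

lemma time_mono (h : IsContinuousTNorm star) {X : Type*} {M : X → X → ℝ → ℝ}
    (hM : IsNAFuzzyMetric star M) (p q : X) {s s' : ℝ} (hs : 0 < s) (hss' : s ≤ s') :
    M p q s ≤ M p q s' := by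
  rcases eq_or_lt_of_le hss' with rfl | hlt
  · exact le_rfl
  have hs' : 0 < s' := hs.trans hlt
  have h1 := hM.na p q q s s' hs hs'
  rw [(hM.km2 q q).mpr rfl s' hs', h.one _ (hM.range p q s hs.le), max_eq_right hss'] at h1
  exact h1

section DD

universe v w
variable {Xa : Type v} {Xb : Type w} {K : ℕ}

noncomputable def DD (star : ℝ → ℝ → ℝ) (Ma : Xa → Xa → ℝ → ℝ) (Mb : Xb → Xb → ℝ → ℝ)
    (xa : Fin K → Xa) (xb : Fin K → Xb) (hK : (Finset.univ : Finset (Fin K)).Nonempty)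
    (p : Xa) (q : Xb) (s : ℝ) : ℝ :=
  Finset.univ.sup' hK fun i => star (Ma p (xa i) s) (Mb (xb i) q s)

variable {Ma : Xa → Xa → ℝ → ℝ} {Mb : Xb → Xb → ℝ → ℝ}
  {xa : Fin K → Xa} {xb : Fin K → Xb} {hK : (Finset.univ : Finset (Fin K)).Nonempty}

lemma DD_term_le (p : Xa) (q : Xb) (s : ℝ) (i : Fin K) :
    star (Ma p (xa i) s) (Mb (xb i) q s) ≤ DD star Ma Mb xa xb hK p q s := by
  unfold DD
  exact Finset.le_sup' (fun i => star (Ma p (xa i) s) (Mb (xb i) q s)) (Finset.mem_univ i)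

lemma DD_exists (p : Xa) (q : Xb) (s : ℝ) :
    ∃ i, DD star Ma Mb xa xb hK p q s = star (Ma p (xa i) s) (Mb (xb i) q s) := by
  obtain ⟨i, _, h⟩ := Finset.exists_mem_eq_sup' hK fun i => star (Ma p (xa i) s) (Mb (xb i) q s)
  exact ⟨i, h⟩

lemma DD_mem (h : IsContinuousTNorm star) (hMa : IsNAFuzzyMetric star Ma)
    (hMb : IsNAFuzzyMetric star Mb) (p : Xa) (q : Xb) {s : ℝ} (hs : 0 ≤ s) :
    DD star Ma Mb xa xb hK p q s ∈ Icc (0:ℝ) 1 := by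
  obtain ⟨i₀⟩ := Finset.nonempty_coe_sort.mpr hK
  constructor
  · exact le_trans (h.mem _ (hMa.range _ _ _ hs) _ (hMb.range _ _ _ hs)).1
      (DD_term_le p q s i₀)
  · exact Finset.sup'_le _ _ fun i _ =>
      (h.mem _ (hMa.range _ _ _ hs) _ (hMb.range _ _ _ hs)).2

lemma DD_mono (h : IsContinuousTNorm star) (hMa : IsNAFuzzyMetric star Ma)
    (hMb : IsNAFuzzyMetric star Mb) (p : Xa) (q : Xb) {s s' : ℝ} (hs : 0 < s) (hss' : s ≤ s') :
    DD star Ma Mb xa xb hK p q s ≤ DD star Ma Mb xa xb hK p q s' := by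
  have hs' : 0 < s' := lt_of_lt_of_le hs hss'
  refine Finset.sup'_le _ _ fun i _ => le_trans ?_ (DD_term_le p q s' i)
  exact h.mono _ _ _ _ (hMa.range _ _ _ hs.le) (hMb.range _ _ _ hs.le)
    (hMa.range _ _ _ hs'.le) (hMb.range _ _ _ hs'.le)
    (time_mono h hMa _ _ hs hss') (time_mono h hMb _ _ hs hss')

lemma DD_swap (h : IsContinuousTNorm star) (hMa : IsNAFuzzyMetric star Ma)
    (hMb : IsNAFuzzyMetric star Mb) (p : Xa) (q : Xb) {s : ℝ} (hs : 0 ≤ s) :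
    DD star Mb Ma xb xa hK q p s = DD star Ma Mb xa xb hK p q s := by
  refine Finset.sup'_congr hK rfl fun i _ => ?_
  rw [hMb.km3 q (xb i), hMa.km3 (xa i) p]
  exact h.comm _ (hMb.range _ _ _ hs) _ (hMa.range _ _ _ hs)

lemma DD_lb (h : IsContinuousTNorm star) (hMa : IsNAFuzzyMetric star Ma)
    (hMb : IsNAFuzzyMetric star Mb) {C : ℝ → ℝ}
    (hCmem : ∀ s, 0 < s → C s ∈ Icc (0:ℝ) 1) (hCmono : MonotoneOn C (Ioi 0))
    (hda : ∀ p p' s, 0 < s → C s ≤ Ma p p' s) (hdb : ∀ q q' s, 0 < s → C s ≤ Mb q q' s)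
    (p : Xa) (q : Xb) {s u : ℝ} (hs : 0 < s) (hsu : s ≤ u) :
    star (C s) (C s) ≤ DD star Ma Mb xa xb hK p q u := by
  have hu : 0 < u := lt_of_lt_of_le hs hsu
  obtain ⟨i₀⟩ := Finset.nonempty_coe_sort.mpr hK
  refine le_trans ?_ (DD_term_le p q u i₀)
  have hCu : C s ≤ C u := hCmono (mem_Ioi.mpr hs) (mem_Ioi.mpr hu) hsu
  exact h.mono _ _ _ _ (hCmem s hs) (hCmem s hs) (hMa.range _ _ _ hu.le)
    (hMb.range _ _ _ hu.le) (hCu.trans (hda p (xa i₀) u hu))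
    (hCu.trans (hdb (xb i₀) q u hu))

lemma mixA (h : IsContinuousTNorm star) (hMa : IsNAFuzzyMetric star Ma)
    (hMb : IsNAFuzzyMetric star Mb) {δ : ℝ} (hδ0 : 0 < δ) (hδ1 : δ < 1)
    (p p' : Xa) (q : Xb) {t' s' : ℝ} (ht' : 0 < t') (hs' : 0 < s') :
    star (Ma p p' t') (star (DD star Ma Mb xa xb hK p' q s') (1 - δ)) ≤
      star (DD star Ma Mb xa xb hK p q (max t' s')) (1 - δ) := by
  have h1δ : (1 - δ) ∈ Icc (0:ℝ) 1 := ⟨by linarith, by linarith⟩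
  have hu : 0 < max t' s' := lt_of_lt_of_le ht' (le_max_left _ _)
  obtain ⟨j, hj⟩ := DD_exists (star := star) (Ma := Ma) (Mb := Mb) (xa := xa) (xb := xb)
    (hK := hK) p' q s'
  set b₁ := Ma p' (xa j) s' with hb₁
  set b₂ := Mb (xb j) q s' with hb₂
  have hA : Ma p p' t' ∈ Icc (0:ℝ) 1 := hMa.range _ _ _ ht'.le
  have hm₁ : b₁ ∈ Icc (0:ℝ) 1 := hMa.range _ _ _ hs'.le
  have hm₂ : b₂ ∈ Icc (0:ℝ) 1 := hMb.range _ _ _ hs'.le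
  have hm₁₂ : star b₁ b₂ ∈ Icc (0:ℝ) 1 := h.mem _ hm₁ _ hm₂
  rw [hj, ← h.assoc _ hA _ hm₁₂ _ h1δ]
  refine h.mono _ _ _ _ (h.mem _ hA _ hm₁₂) h1δ
    (DD_mem h hMa hMb p q hu.le) h1δ ?_ le_rfl
  rw [← h.assoc _ hA _ hm₁ _ hm₂]
  refine le_trans ?_ (DD_term_le p q (max t' s') j)
  refine h.mono _ _ _ _ (h.mem _ hA _ hm₁) hm₂ (hMa.range _ _ _ hu.le)
    (hMb.range _ _ _ hu.le) (hMa.na p p' (xa j) t' s' ht' hs')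
    (time_mono h hMb _ _ hs' (le_max_right _ _))

lemma mixB (h : IsContinuousTNorm star) (hMa : IsNAFuzzyMetric star Ma)
    (hMb : IsNAFuzzyMetric star Mb) {δ : ℝ} (hδ0 : 0 < δ) (hδ1 : δ < 1)
    (p : Xa) (q q' : Xb) {t' s' : ℝ} (ht' : 0 < t') (hs' : 0 < s') :
    star (star (DD star Ma Mb xa xb hK p q t') (1 - δ)) (Mb q q' s') ≤
      star (DD star Ma Mb xa xb hK p q' (max t' s')) (1 - δ) := by
  have h1δ : (1 - δ) ∈ Icc (0:ℝ) 1 := ⟨by linarith, by linarith⟩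
  have hu : 0 < max t' s' := lt_of_lt_of_le ht' (le_max_left _ _)
  obtain ⟨i, hi⟩ := DD_exists (star := star) (Ma := Ma) (Mb := Mb) (xa := xa) (xb := xb)
    (hK := hK) p q t'
  set a₁ := Ma p (xa i) t' with ha₁
  set a₂ := Mb (xb i) q t' with ha₂
  have hB : Mb q q' s' ∈ Icc (0:ℝ) 1 := hMb.range _ _ _ hs'.le
  have hm₁ : a₁ ∈ Icc (0:ℝ) 1 := hMa.range _ _ _ ht'.le
  have hm₂ : a₂ ∈ Icc (0:ℝ) 1 := hMb.range _ _ _ ht'.le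
  have hm₁₂ : star a₁ a₂ ∈ Icc (0:ℝ) 1 := h.mem _ hm₁ _ hm₂
  rw [hi, h.assoc _ hm₁₂ _ h1δ _ hB, h.comm _ h1δ _ hB, ← h.assoc _ hm₁₂ _ hB _ h1δ]
  refine h.mono _ _ _ _ (h.mem _ hm₁₂ _ hB) h1δ (DD_mem h hMa hMb p q' hu.le) h1δ ?_ le_rfl
  rw [h.assoc _ hm₁ _ hm₂ _ hB]
  refine le_trans ?_ (DD_term_le p q' (max t' s') i)
  refine h.mono _ _ _ _ hm₁ (h.mem _ hm₂ _ hB) (hMa.range _ _ _ hu.le)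
    (hMb.range _ _ _ hu.le) (time_mono h hMa _ _ ht' (le_max_left _ _)) ?_
  exact hMb.na (xb i) q q' t' s' ht' hs'

lemma hardA (h : IsContinuousTNorm star) (hMa : IsNAFuzzyMetric star Ma)
    (hMb : IsNAFuzzyMetric star Mb) {δ t₀ : ℝ} (hδ0 : 0 < δ) (hδ1 : δ < 1) (ht₀ : 0 < t₀)
    (hclose : ∀ u, t₀ ≤ u → ∀ i j, star (Mb (xb i) (xb j) u) (1 - δ) ≤ Ma (xa i) (xa j) u)
    (p p' : Xa) (q : Xb) {t' s' : ℝ} (ht' : t₀ < t') (hs' : t₀ < s') :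
    star (star (DD star Ma Mb xa xb hK p q t') (1 - δ))
      (star (DD star Ma Mb xa xb hK p' q s') (1 - δ)) ≤ Ma p p' (max t' s') := by
  have h1δ : (1 - δ) ∈ Icc (0:ℝ) 1 := ⟨by linarith, by linarith⟩
  have ht'0 : 0 < t' := ht₀.trans ht'
  have hs'0 : 0 < s' := ht₀.trans hs'
  set u := max t' s' with hudef
  have hu : 0 < u := lt_of_lt_of_le ht'0 (le_max_left _ _)
  have hut₀ : t₀ ≤ u := le_trans ht'.le (le_max_left _ _)
  obtain ⟨i, hi⟩ := DD_exists (star := star) (Ma := Ma) (Mb := Mb) (xa := xa) (xb := xb)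
    (hK := hK) p q t'
  obtain ⟨j, hj⟩ := DD_exists (star := star) (Ma := Ma) (Mb := Mb) (xa := xa) (xb := xb)
    (hK := hK) p' q s'
  set a₁ := Ma p (xa i) t' with ha₁
  set a₂ := Mb (xb i) q t' with ha₂
  set b₁ := Ma p' (xa j) s' with hb₁
  set b₂ := Mb (xb j) q s' with hb₂
  have hma₁ : a₁ ∈ Icc (0:ℝ) 1 := hMa.range _ _ _ ht'0.le
  have hma₂ : a₂ ∈ Icc (0:ℝ) 1 := hMb.range _ _ _ ht'0.le
  have hmb₁ : b₁ ∈ Icc (0:ℝ) 1 := hMa.range _ _ _ hs'0.le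
  have hmb₂ : b₂ ∈ Icc (0:ℝ) 1 := hMb.range _ _ _ hs'0.le
  have hX : star a₁ a₂ ∈ Icc (0:ℝ) 1 := h.mem _ hma₁ _ hma₂
  have hY : star b₁ b₂ ∈ Icc (0:ℝ) 1 := h.mem _ hmb₁ _ hmb₂
  have h11 : star (1-δ) (1-δ) ∈ Icc (0:ℝ) 1 := h.mem _ h1δ _ h1δ
  have ha₁b₁ : star a₁ b₁ ∈ Icc (0:ℝ) 1 := h.mem _ hma₁ _ hmb₁
  have ha₂b₂ : star a₂ b₂ ∈ Icc (0:ℝ) 1 := h.mem _ hma₂ _ hmb₂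
  -- the key middle bound
  have hmid : star (star a₂ b₂) (star (1-δ) (1-δ)) ≤ Ma (xa i) (xa j) u := by
    have hstep : star a₂ b₂ ≤ Mb (xb i) (xb j) u := by
      rw [ha₂, hb₂, hMb.km3 (xb j) q s']
      exact hMb.na (xb i) q (xb j) t' s' ht'0 hs'0
    have hBij : Mb (xb i) (xb j) u ∈ Icc (0:ℝ) 1 := hMb.range _ _ _ hu.le
    calc star (star a₂ b₂) (star (1-δ) (1-δ))
        = star (star (star a₂ b₂) (1-δ)) (1-δ) := (h.assoc _ ha₂b₂ _ h1δ _ h1δ).symm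
      _ ≤ star (star (Mb (xb i) (xb j) u) (1-δ)) (1-δ) := by
          refine h.mono _ _ _ _ (h.mem _ ha₂b₂ _ h1δ) h1δ (h.mem _ hBij _ h1δ) h1δ ?_ le_rfl
          exact h.mono _ _ _ _ ha₂b₂ h1δ hBij h1δ hstep le_rfl
      _ ≤ star (Ma (xa i) (xa j) u) (1-δ) := by
          refine h.mono _ _ _ _ (h.mem _ hBij _ h1δ) h1δ (hMa.range _ _ _ hu.le) h1δ ?_ le_rfl
          exact hclose u hut₀ i j
      _ ≤ Ma (xa i) (xa j) u := star_le_left h (hMa.range _ _ _ hu.le) h1δ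
  have hAij : Ma (xa i) (xa j) u ∈ Icc (0:ℝ) 1 := hMa.range _ _ _ hu.le
  have hpai : Ma p (xa i) u ∈ Icc (0:ℝ) 1 := hMa.range _ _ _ hu.le
  have hjp' : Ma p' (xa j) u ∈ Icc (0:ℝ) 1 := hMa.range _ _ _ hu.le
  calc star (star (DD star Ma Mb xa xb hK p q t') (1 - δ))
        (star (DD star Ma Mb xa xb hK p' q s') (1 - δ))
      = star (star (star a₁ a₂) (star b₁ b₂)) (star (1-δ) (1-δ)) := by
        rw [hi, hj]; exact star4 h hX h1δ hY h1δ
    _ = star (star (star a₁ b₁) (star a₂ b₂)) (star (1-δ) (1-δ)) := by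
        rw [star4 h hma₁ hma₂ hmb₁ hmb₂]
    _ = star (star a₁ b₁) (star (star a₂ b₂) (star (1-δ) (1-δ))) :=
        h.assoc _ ha₁b₁ _ ha₂b₂ _ h11
    _ ≤ star (star (Ma p (xa i) u) (Ma p' (xa j) u)) (Ma (xa i) (xa j) u) := by
        refine h.mono _ _ _ _ ha₁b₁ (h.mem _ ha₂b₂ _ h11) (h.mem _ hpai _ hjp') hAij ?_ hmid
        exact h.mono _ _ _ _ hma₁ hmb₁ hpai hjp'
          (time_mono h hMa _ _ ht'0 (le_max_left _ _))
          (time_mono h hMa _ _ hs'0 (le_max_right _ _))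
    _ = star (Ma p (xa i) u) (star (Ma (xa i) (xa j) u) (Ma p' (xa j) u)) := by
        rw [h.assoc _ hpai _ hjp' _ hAij, h.comm _ hjp' _ hAij]
    _ ≤ star (Ma p (xa i) u) (Ma (xa i) p' u) := by
        refine h.mono _ _ _ _ hpai (h.mem _ hAij _ hjp') hpai (hMa.range _ _ _ hu.le)
          le_rfl ?_
        have := hMa.na (xa i) (xa j) p' u u hu hu
        rw [max_self] at this
        rw [hMa.km3 p' (xa j) u]
        exact this
    _ ≤ Ma p p' u := by
        have := hMa.na p (xa i) p' u u hu hu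
        rw [max_self] at this
        exact this

end DD

namespace FuzzyAux2
end FuzzyAux2

lemma tendsto_star (h : IsContinuousTNorm star) {α : Type*} {l : Filter α}
    {f g : α → ℝ} {a b : ℝ} (ha : a ∈ Icc (0:ℝ) 1) (hb : b ∈ Icc (0:ℝ) 1)
    (hf : Tendsto f l (nhds a)) (hg : Tendsto g l (nhds b))
    (hfm : ∀ᶠ x in l, f x ∈ Icc (0:ℝ) 1) (hgm : ∀ᶠ x in l, g x ∈ Icc (0:ℝ) 1) :
    Tendsto (fun x => star (f x) (g x)) l (nhds (star a b)) := by
  have hc : ContinuousWithinAt (fun p : ℝ × ℝ => star p.1 p.2) (Icc 0 1 ×ˢ Icc 0 1) (a, b) :=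
    h.continuous (a, b) ⟨ha, hb⟩
  have hpair : Tendsto (fun x => (f x, g x)) l
      (nhdsWithin (a, b) (Icc (0:ℝ) 1 ×ˢ Icc (0:ℝ) 1)) := by
    rw [tendsto_nhdsWithin_iff]
    exact ⟨hf.prodMk_nhds hg, by filter_upwards [hfm, hgm] with x h1 h2 using ⟨h1, h2⟩⟩
  exact hc.tendsto.comp hpair

lemma cwa_star (h : IsContinuousTNorm star) {f g : ℝ → ℝ} {st : Set ℝ} {x : ℝ}
    (hf : ContinuousWithinAt f st x) (hg : ContinuousWithinAt g st x)
    (hfx : f x ∈ Icc (0:ℝ) 1) (hgx : g x ∈ Icc (0:ℝ) 1)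
    (hfm : ∀ᶠ y in nhdsWithin x st, f y ∈ Icc (0:ℝ) 1)
    (hgm : ∀ᶠ y in nhdsWithin x st, g y ∈ Icc (0:ℝ) 1) :
    ContinuousWithinAt (fun y => star (f y) (g y)) st x :=
  tendsto_star h hfx hgx hf hg hfm hgm

lemma cwa_sup' {ι : Type*} {A : Finset ι} (hA : A.Nonempty) {F : ι → ℝ → ℝ}
    {st : Set ℝ} {x : ℝ} (h : ∀ i ∈ A, ContinuousWithinAt (F i) st x) :
    ContinuousWithinAt (fun r => A.sup' hA fun i => F i r) st x := by
  refine Finset.Nonempty.cons_induction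
    (motive := fun B hB => (∀ i ∈ B, ContinuousWithinAt (F i) st x) →
      ContinuousWithinAt (fun r => B.sup' hB fun i => F i r) st x) ?_ ?_ hA h
  · intro a ha
    simp only [Finset.sup'_singleton]
    exact ha a (Finset.mem_singleton_self a)
  · intro a B haB hB ih hmem
    have h1 : ContinuousWithinAt (F a) st x := hmem a (Finset.mem_cons_self a B)
    have h2 := ih fun i hi => hmem i (Finset.mem_cons_of_mem hi)
    have heq : (fun r => (Finset.cons a B haB).sup' (Finset.cons_nonempty haB) fun i => F i r)
        = fun r => max (F a r) (B.sup' hB fun i => F i r) := by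
      ext r; rw [Finset.sup'_cons hB]
    rw [heq]
    exact h1.max h2

/-- TN1 strictness: `star a c < a` for `0 < a ≤ 1`, `0 ≤ c < 1`. -/
lemma tn1_strict (h : IsContinuousTNorm star) (htn1 : TN1 star) {a c : ℝ}
    (ha0 : 0 < a) (ha1 : a ≤ 1) (hc0 : 0 ≤ c) (hc1 : c < 1) : star a c < a := by
  have hamem : a ∈ Icc (0:ℝ) 1 := ⟨ha0.le, ha1⟩
  have hcmem : c ∈ Icc (0:ℝ) 1 := ⟨hc0, hc1.le⟩
  rcases lt_or_eq_of_le (star_le_left h hamem hcmem) with hlt | heq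
  · exact hlt
  exfalso
  -- iterate squaring of c
  set q : ℕ → ℝ := fun k => Nat.rec c (fun _ w => star w w) k with hq
  have hq0 : q 0 = c := rfl
  have hqs : ∀ k, q (k + 1) = star (q k) (q k) := fun k => rfl
  have hqmem : ∀ k, q k ∈ Icc (0:ℝ) 1 := by
    intro k; induction k with
    | zero => exact hcmem
    | succ n ih => rw [hqs]; exact h.mem _ ih _ ih
  have hqfix : ∀ k, star a (q k) = a := by
    intro k; induction k with
    | zero => exact heq
    | succ n ih =>
      rw [hqs, ← h.assoc a hamem _ (hqmem n) _ (hqmem n), ih, ih]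
  have hqanti : Antitone q := by
    apply antitone_nat_of_succ_le
    intro n; rw [hqs]; exact star_le_left h (hqmem n) (hqmem n)
  have hbdd : BddBelow (Set.range q) := ⟨0, by rintro _ ⟨k, rfl⟩; exact (hqmem k).1⟩
  set L : ℝ := ⨅ k, q k with hL
  have htend : Tendsto q atTop (nhds L) := tendsto_atTop_ciInf hqanti hbdd
  have hLmem : L ∈ Icc (0:ℝ) 1 := by
    constructor
    · exact le_ciInf fun k => (hqmem k).1
    · exact le_trans (ciInf_le hbdd 0) hcmem.2
  -- star L L = L
  have h1 : Tendsto (fun k => q (k + 1)) atTop (nhds L) := htend.comp (tendsto_add_atTop_nat 1)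
  have h2 : Tendsto (fun k => star (q k) (q k)) atTop (nhds (star L L)) :=
    tendsto_star h hLmem hLmem htend htend (Eventually.of_forall hqmem) (Eventually.of_forall hqmem)
  have hLL : star L L = L := by
    have := tendsto_nhds_unique h2 (by simpa only [← hqs] using h1)
    exact this
  -- star a L = a
  have h3 : Tendsto (fun k => star a (q k)) atTop (nhds (star a L)) :=
    tendsto_star h hamem hLmem tendsto_const_nhds htend
      (Eventually.of_forall fun _ => hamem) (Eventually.of_forall hqmem)
  have haL : star a L = a :=
    tendsto_nhds_unique h3 (by simpa only [hqfix] using tendsto_const_nhds)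
  have haleL : a ≤ L := haL ▸ star_le_right h hamem hLmem
  have hL0 : 0 < L := lt_of_lt_of_le ha0 haleL
  have hLlec : L ≤ c := ciInf_le hbdd 0
  have hLlt1 : L < 1 := lt_of_le_of_lt hLlec hc1
  -- TN1 at (L, L)
  have h1L : (1 - L) ∈ Icc (0:ℝ) 1 := ⟨by linarith, by linarith⟩
  have hz : star L (1 - L) = 0 := by
    have := htn1 L hLmem L hLmem
    rw [hLL] at this
    have h0 : 0 ≤ star L (1 - L) := (h.mem L hLmem _ h1L).1
    linarith
  -- f := star L ·  is idempotent retraction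
  set f : ℝ → ℝ := fun y => star L y with hf
  have hff : ∀ y ∈ Icc (0:ℝ) 1, f (f y) = f y := by
    intro y hy
    show star L (star L y) = star L y
    rw [← h.assoc L hLmem L hLmem y hy, hLL]
  have hfcont : ContinuousOn f (Icc (0:ℝ) 1) := by
    have : ContinuousOn (fun y : ℝ => ((L, y) : ℝ × ℝ)) (Icc 0 1) :=
      (continuous_const.prodMk continuous_id).continuousOn
    exact h.continuous.comp this (fun y hy => ⟨hLmem, hy⟩)
  have hf0 : f 0 = 0 := by
    have h0 : (0:ℝ) ∈ Icc (0:ℝ) 1 := by norm_num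
    have := star_le_right h hLmem h0
    have h2 := (h.mem L hLmem 0 h0).1
    exact le_antisymm this h2
  have hf1 : f 1 = L := h.one L hLmem
  set w : ℝ := min (1 - L) L with hw
  have hwmem : w ∈ Icc (0:ℝ) 1 := ⟨le_min (by linarith) hL0.le, le_trans (min_le_right _ _) hLmem.2⟩
  have hfw : f w = 0 := by
    have hle : f w ≤ star L (1 - L) :=
      h.mono L w L (1 - L) hLmem hwmem hLmem h1L le_rfl (min_le_left _ _)
    have h2 := (h.mem L hLmem w hwmem).1
    rw [hz] at hle; exact le_antisymm hle h2
  -- IVT: w is in image of f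
  have hwIcc : w ∈ Icc (f 0) (f 1) := by
    rw [hf0, hf1]; exact ⟨hwmem.1, min_le_right _ _⟩
  obtain ⟨y, hy, hyw⟩ := intermediate_value_Icc (by norm_num : (0:ℝ) ≤ 1) hfcont hwIcc
  have : f w = w := by rw [← hyw, hff y hy]
  rw [hfw] at this
  have hw0 : w = 0 := this.symm
  have hmin : min (1 - L) L = 0 := by rw [← hw]; exact hw0
  have : 1 - L = 0 ∨ L = 0 := by
    rcases min_eq_iff.mp hmin with h | h
    · exact Or.inl h.1
    · exact Or.inr h.1
  rcases this with h | h
  · linarith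
  · linarith


end FuzzyAux

namespace FuzzyAux

universe v w
variable {star : ℝ → ℝ → ℝ}

theorem key_construction (hstar : IsContinuousTNorm star)
    {Xa : Type v} {Xb : Type w} [Nonempty Xa] [Nonempty Xb]
    {Ma : Xa → Xa → ℝ → ℝ} {Mb : Xb → Xb → ℝ → ℝ}
    (hMa : IsNAFuzzyMetric star Ma) (hMb : IsNAFuzzyMetric star Mb)
    {C : ℝ → ℝ} (hCmono : MonotoneOn C (Ioi 0))
    (hClc : ∀ s, 0 < s → ContinuousWithinAt C (Iio s) s)
    (hCmem : ∀ s, 0 < s → C s ∈ Icc (0:ℝ) 1)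
    (hda : ∀ p p' s, 0 < s → C s ≤ Ma p p' s)
    (hdb : ∀ q q' s, 0 < s → C s ≤ Mb q q' s)
    {t₀ δ : ℝ} (ht₀ : 0 < t₀) (hδ0 : 0 < δ) (hδ1 : δ < 1)
    {K : ℕ} {xa : Fin K → Xa} {xb : Fin K → Xb}
    (hna : ∀ p, ∃ i, 1 - δ < Ma p (xa i) t₀)
    (hnb : ∀ q, ∃ i, 1 - δ < Mb q (xb i) t₀)
    (hcab : ∀ u, t₀ ≤ u → ∀ i j, star (Mb (xb i) (xb j) u) (1 - δ) ≤ Ma (xa i) (xa j) u)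
    (hcba : ∀ u, t₀ ≤ u → ∀ i j, star (Ma (xa i) (xa j) u) (1 - δ) ≤ Mb (xb i) (xb j) u)
    {t : ℝ} (ht : t₀ < t) :
    star (1 - δ) (1 - δ) ≤ MGH star Ma Mb t := by
  classical
  have hK : (Finset.univ : Finset (Fin K)).Nonempty := by
    obtain ⟨i, _⟩ := hna (Classical.arbitrary Xa); exact ⟨i, Finset.mem_univ i⟩
  have h1δ : (1 - δ) ∈ Icc (0:ℝ) 1 := ⟨by linarith, by linarith⟩
  have ht0 : 0 < t := ht₀.trans ht
  set D := DD star Ma Mb xa xb hK with hD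
  set Mc : Xa → Xb → ℝ → ℝ := fun p q s =>
    if t₀ < s then star (D p q s) (1 - δ)
    else if 0 < s then star (star (C s) (C s)) (1 - δ) else 0 with hMc
  -- basic facts about Mc
  have hMc_eqD : ∀ p q s, t₀ < s → Mc p q s = star (D p q s) (1 - δ) := by
    intro p q s h; simp only [hMc]; rw [if_pos h]
  have hMc_eqg : ∀ p q s, 0 < s → s ≤ t₀ → Mc p q s = star (star (C s) (C s)) (1 - δ) := by
    intro p q s h0 hle; simp only [hMc]; rw [if_neg (not_lt.mpr hle), if_pos h0]
  have hMc_eq0 : ∀ p q s, s ≤ 0 → Mc p q s = 0 := by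
    intro p q s hle; simp only [hMc]
    rw [if_neg (not_lt.mpr (hle.trans ht₀.le)), if_neg (not_lt.mpr hle)]
  have hMc_mem : ∀ p q s, 0 ≤ s → Mc p q s ∈ Icc (0:ℝ) 1 := by
    intro p q s hs
    rcases lt_or_ge t₀ s with h | h
    · rw [hMc_eqD p q s h]
      exact hstar.mem _ (DD_mem hstar hMa hMb p q hs) _ h1δ
    rcases lt_or_ge 0 s with h0 | h0
    · rw [hMc_eqg p q s h0 h]
      exact hstar.mem _ (hstar.mem _ (hCmem s h0) _ (hCmem s h0)) _ h1δ
    · rw [hMc_eq0 p q s h0]; norm_num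
  have hMc_le1δ : ∀ p q s, 0 ≤ s → Mc p q s ≤ 1 - δ := by
    intro p q s hs
    rcases lt_or_ge t₀ s with h | h
    · rw [hMc_eqD p q s h]
      exact star_le_right hstar (DD_mem hstar hMa hMb p q hs) h1δ
    rcases lt_or_ge 0 s with h0 | h0
    · rw [hMc_eqg p q s h0 h]
      exact star_le_right hstar (hstar.mem _ (hCmem s h0) _ (hCmem s h0)) h1δ
    · rw [hMc_eq0 p q s h0]; linarith
  have hgmem : ∀ s, 0 < s → star (star (C s) (C s)) (1 - δ) ∈ Icc (0:ℝ) 1 := fun s hs =>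
    hstar.mem _ (hstar.mem _ (hCmem s hs) _ (hCmem s hs)) _ h1δ
  have hg_le_C : ∀ s, 0 < s → star (star (C s) (C s)) (1 - δ) ≤ C s := fun s hs =>
    le_trans (star_le_left hstar (hstar.mem _ (hCmem s hs) _ (hCmem s hs)) h1δ)
      (star_le_left hstar (hCmem s hs) (hCmem s hs))
  have hg_le_Mc : ∀ (w u : ℝ), 0 < w → w ≤ t₀ → w ≤ u → ∀ p q,
      star (star (C w) (C w)) (1 - δ) ≤ Mc p q u := by
    intro w u hw hwt₀ hwu p q
    have hu : 0 < u := lt_of_lt_of_le hw hwu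
    rcases lt_or_ge t₀ u with h | h
    · rw [hMc_eqD p q u h]
      refine hstar.mono _ _ _ _ (hstar.mem _ (hCmem w hw) _ (hCmem w hw)) h1δ
        (DD_mem hstar hMa hMb p q hu.le) h1δ ?_ le_rfl
      exact DD_lb hstar hMa hMb hCmem hCmono hda hdb p q hw hwu
    · rw [hMc_eqg p q u hu h]
      refine hstar.mono _ _ _ _ (hstar.mem _ (hCmem w hw) _ (hCmem w hw)) h1δ
        (hstar.mem _ (hCmem u hu) _ (hCmem u hu)) h1δ ?_ le_rfl
      have hCwu : C w ≤ C u := hCmono (mem_Ioi.mpr hw) (mem_Ioi.mpr hu) hwu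
      exact hstar.mono _ _ _ _ (hCmem w hw) (hCmem w hw) (hCmem u hu) (hCmem u hu) hCwu hCwu
  have hMc_le_C : ∀ p q w, 0 < w → w ≤ t₀ → Mc p q w ≤ C w := by
    intro p q w h0 hle
    rw [hMc_eqg p q w h0 hle]; exact hg_le_C w h0
  -- NA core cases
  have hLLR : ∀ p p' q t' s', 0 < t' → 0 < s' →
      star (Ma p p' t') (Mc p' q s') ≤ Mc p q (max t' s') := by
    intro p p' q t' s' ht' hs'
    rcases lt_or_ge t₀ s' with h | h
    · have hu : t₀ < max t' s' := lt_of_lt_of_le h (le_max_right _ _)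
      rw [hMc_eqD p' q s' h, hMc_eqD p q _ hu]
      exact mixA hstar hMa hMb hδ0 hδ1 p p' q ht' hs'
    · rw [hMc_eqg p' q s' hs' h]
      refine le_trans (star_le_right hstar (hMa.range _ _ _ ht'.le) (hgmem s' hs')) ?_
      exact hg_le_Mc s' (max t' s') hs' h (le_max_right _ _) p q
  have hLRR : ∀ p q q' t' s', 0 < t' → 0 < s' →
      star (Mc p q t') (Mb q q' s') ≤ Mc p q' (max t' s') := by
    intro p q q' t' s' ht' hs'
    rcases lt_or_ge t₀ t' with h | h
    · have hu : t₀ < max t' s' := lt_of_lt_of_le h (le_max_left _ _)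
      rw [hMc_eqD p q t' h, hMc_eqD p q' _ hu]
      exact mixB hstar hMa hMb hδ0 hδ1 p q q' ht' hs'
    · rw [hMc_eqg p q t' ht' h]
      refine le_trans (star_le_left hstar (hgmem t' ht') (hMb.range _ _ _ hs'.le)) ?_
      exact hg_le_Mc t' (max t' s') ht' h (le_max_left _ _) p q'
  have hLRL : ∀ p p' q t' s', 0 < t' → 0 < s' →
      star (Mc p q t') (Mc p' q s') ≤ Ma p p' (max t' s') := by
    intro p p' q t' s' ht' hs'
    have humem : 0 < max t' s' := lt_of_lt_of_le ht' (le_max_left _ _)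
    rcases lt_or_ge t₀ t' with h1 | h1
    · rcases lt_or_ge t₀ s' with h2 | h2
      · rw [hMc_eqD p q t' h1, hMc_eqD p' q s' h2]
        exact hardA hstar hMa hMb hδ0 hδ1 ht₀ hcab p p' q h1 h2
      · refine le_trans (star_le_right hstar (hMc_mem p q t' ht'.le)
          (hMc_mem p' q s' hs'.le)) ?_
        refine le_trans (hMc_le_C p' q s' hs' h2) ?_
        refine le_trans (hCmono (mem_Ioi.mpr hs') (mem_Ioi.mpr humem) (le_max_right _ _)) ?_
        exact hda p p' _ humem
    · refine le_trans (star_le_left hstar (hMc_mem p q t' ht'.le)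
        (hMc_mem p' q s' hs'.le)) ?_
      refine le_trans (hMc_le_C p q t' ht' h1) ?_
      refine le_trans (hCmono (mem_Ioi.mpr ht') (mem_Ioi.mpr humem) (le_max_left _ _)) ?_
      exact hda p p' _ humem
  have hRLR : ∀ p q q' t' s', 0 < t' → 0 < s' →
      star (Mc p q t') (Mc p q' s') ≤ Mb q q' (max t' s') := by
    intro p q q' t' s' ht' hs'
    have humem : 0 < max t' s' := lt_of_lt_of_le ht' (le_max_left _ _)
    rcases lt_or_ge t₀ t' with h1 | h1
    · rcases lt_or_ge t₀ s' with h2 | h2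
      · rw [hMc_eqD p q t' h1, hMc_eqD p q' s' h2, hD,
          ← DD_swap hstar hMa hMb p q (ht₀.trans h1).le,
          ← DD_swap hstar hMa hMb p q' (ht₀.trans h2).le]
        exact hardA hstar hMb hMa hδ0 hδ1 ht₀ hcba q q' p h1 h2
      · refine le_trans (star_le_right hstar (hMc_mem p q t' ht'.le)
          (hMc_mem p q' s' hs'.le)) ?_
        refine le_trans (hMc_le_C p q' s' hs' h2) ?_
        refine le_trans (hCmono (mem_Ioi.mpr hs') (mem_Ioi.mpr humem) (le_max_right _ _)) ?_
        exact hdb q q' _ humem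
    · refine le_trans (star_le_left hstar (hMc_mem p q t' ht'.le)
        (hMc_mem p q' s' hs'.le)) ?_
      refine le_trans (hMc_le_C p q t' ht' h1) ?_
      refine le_trans (hCmono (mem_Ioi.mpr ht') (mem_Ioi.mpr humem) (le_max_left _ _)) ?_
      exact hdb q q' _ humem
  -- cross continuity
  have hMccwa : ∀ p q u, 0 < u → ContinuousWithinAt (Mc p q) (Iio u) u := by
    intro p q u hu
    have hev0 : ∀ᶠ s in nhdsWithin u (Iio u), 0 < s :=
      eventually_of_mem (nhdsWithin_le_nhds (isOpen_Ioi.mem_nhds hu)) fun s hs => hs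
    rcases lt_or_ge t₀ u with hcase | hcase
    · have hevt₀ : ∀ᶠ s in nhdsWithin u (Iio u), t₀ < s :=
        eventually_of_mem (nhdsWithin_le_nhds (isOpen_Ioi.mem_nhds hcase)) fun s hs => hs
      have hDcwa : ContinuousWithinAt (fun s => D p q s) (Iio u) u := by
        refine cwa_sup' hK fun i _ => ?_
        refine cwa_star hstar (hMa.km5 p (xa i) u hu) (hMb.km5 (xb i) q u hu)
          (hMa.range _ _ _ hu.le) (hMb.range _ _ _ hu.le) ?_ ?_
        · filter_upwards [hev0] with s hs using hMa.range _ _ _ hs.le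
        · filter_upwards [hev0] with s hs using hMb.range _ _ _ hs.le
      have hbase : ContinuousWithinAt (fun s => star (D p q s) (1 - δ)) (Iio u) u := by
        refine cwa_star hstar hDcwa continuousWithinAt_const
          (DD_mem hstar hMa hMb p q hu.le) h1δ ?_ (Eventually.of_forall fun _ => h1δ)
        filter_upwards [hev0] with s hs using DD_mem hstar hMa hMb p q hs.le
      refine hbase.congr_of_eventuallyEq ?_ (hMc_eqD p q u hcase)
      filter_upwards [hevt₀] with s hs using hMc_eqD p q s hs
    · have hbase : ContinuousWithinAt
          (fun s => star (star (C s) (C s)) (1 - δ)) (Iio u) u := by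
        have hCcwa := hClc u hu
        have hevC : ∀ᶠ s in nhdsWithin u (Iio u), C s ∈ Icc (0:ℝ) 1 := by
          filter_upwards [hev0] with s hs using hCmem s hs
        refine cwa_star hstar (cwa_star hstar hCcwa hCcwa (hCmem u hu) (hCmem u hu) hevC hevC)
          continuousWithinAt_const (hstar.mem _ (hCmem u hu) _ (hCmem u hu)) h1δ ?_
          (Eventually.of_forall fun _ => h1δ)
        filter_upwards [hev0] with s hs using hstar.mem _ (hCmem s hs) _ (hCmem s hs)
      refine hbase.congr_of_eventuallyEq ?_ (hMc_eqg p q u hu hcase)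
      filter_upwards [hev0, eventually_mem_nhdsWithin] with s hs0 hsu
      exact hMc_eqg p q s hs0 ((le_of_lt hsu).trans hcase)
  -- the glued fuzzy metric
  set MS : (Xa ⊕ Xb) → (Xa ⊕ Xb) → ℝ → ℝ := fun x y =>
    match x, y with
    | Sum.inl p, Sum.inl p' => Ma p p'
    | Sum.inl p, Sum.inr q => Mc p q
    | Sum.inr q, Sum.inl p => Mc p q
    | Sum.inr q, Sum.inr q' => Mb q q' with hMS
  have hMSmem : ∀ x y s, 0 ≤ s → MS x y s ∈ Icc (0:ℝ) 1 := by
    intro x y s hs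
    rcases x with p | q <;> rcases y with p' | q'
    · exact hMa.range p p' s hs
    · exact hMc_mem p q' s hs
    · exact hMc_mem p' q s hs
    · exact hMb.range q q' s hs
  have hsum : IsNAFuzzyMetric star MS := by
    refine ⟨hMSmem, ?_, ?_, ?_, ?_, ?_⟩
    · intro x y
      rcases x with p | q <;> rcases y with p' | q'
      · exact hMa.km1 p p'
      · exact hMc_eq0 p q' 0 le_rfl
      · exact hMc_eq0 p' q 0 le_rfl
      · exact hMb.km1 q q'
    · intro x y
      rcases x with p | q <;> rcases y with p' | q'
      · constructor
        · intro h; exact congrArg Sum.inl ((hMa.km2 p p').mp h)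
        · intro h; exact (hMa.km2 p p').mpr (Sum.inl.inj h)
      · constructor
        · intro h
          exfalso
          have h1 : Mc p q' (t₀ + 1) = 1 := h (t₀ + 1) (by linarith)
          have h2 := hMc_le1δ p q' (t₀ + 1) (by linarith)
          rw [h1] at h2; linarith
        · intro h; exact (Sum.inl_ne_inr h).elim
      · constructor
        · intro h
          exfalso
          have h1 : Mc p' q (t₀ + 1) = 1 := h (t₀ + 1) (by linarith)
          have h2 := hMc_le1δ p' q (t₀ + 1) (by linarith)
          rw [h1] at h2; linarith
        · intro h; exact (Sum.inr_ne_inl h).elim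
      · constructor
        · intro h; exact congrArg Sum.inr ((hMb.km2 q q').mp h)
        · intro h; exact (hMb.km2 q q').mpr (Sum.inr.inj h)
    · intro x y s
      rcases x with p | q <;> rcases y with p' | q'
      · exact hMa.km3 p p' s
      · rfl
      · rfl
      · exact hMb.km3 q q' s
    · intro x y z t' s' ht' hs'
      rcases x with p | q <;> rcases y with p' | q' <;> rcases z with p'' | q''
      · exact hMa.na p p' p'' t' s' ht' hs'
      · exact hLLR p p' q'' t' s' ht' hs'
      · exact hLRL p p'' q' t' s' ht' hs'
      · exact hLRR p q' q'' t' s' ht' hs'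
      · show star (Mc p' q t') (Ma p' p'' s') ≤ Mc p'' q (max t' s')
        rw [hstar.comm _ (hMc_mem p' q t' ht'.le) _ (hMa.range _ _ _ hs'.le),
          hMa.km3 p' p'' s', max_comm]
        exact hLLR p'' p' q s' t' hs' ht'
      · exact hRLR p' q q'' t' s' ht' hs'
      · show star (Mb q q' t') (Mc p'' q' s') ≤ Mc p'' q (max t' s')
        rw [hstar.comm _ (hMb.range _ _ _ ht'.le) _ (hMc_mem p'' q' s' hs'.le),
          hMb.km3 q q' t', max_comm]
        exact hLRR p'' q' q s' t' hs' ht'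
      · exact hMb.na q q' q'' t' s' ht' hs'
    · intro x y u hu
      rcases x with p | q <;> rcases y with p' | q'
      · exact hMa.km5 p p' u hu
      · exact hMccwa p q' u hu
      · exact hMccwa p' q u hu
      · exact hMb.km5 q q' u hu
  have hadm : IsAdmissible star Ma Mb MS := ⟨hsum, fun _ _ _ _ => rfl, fun _ _ _ _ => rfl⟩
  -- lower bound for the Hausdorff fuzzy distance
  have hsupbdd : ∀ p : Xa, BddAbove (Set.range fun q : Xb => MS (Sum.inl p) (Sum.inr q) t) := by
    intro p; refine ⟨1, ?_⟩; rintro _ ⟨q, rfl⟩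
    exact (hMSmem (Sum.inl p) (Sum.inr q) t ht0.le).2
  have hsupbdd' : ∀ q : Xb, BddAbove (Set.range fun p : Xa => MS (Sum.inl p) (Sum.inr q) t) := by
    intro q; refine ⟨1, ?_⟩; rintro _ ⟨p, rfl⟩
    exact (hMSmem (Sum.inl p) (Sum.inr q) t ht0.le).2
  have hside1 : star (1 - δ) (1 - δ) ≤ ⨅ p : Xa, ⨆ q : Xb, MS (Sum.inl p) (Sum.inr q) t := by
    refine le_ciInf fun p => ?_
    obtain ⟨i, hi⟩ := hna p
    have h1 : 1 - δ ≤ Ma p (xa i) t :=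
      le_of_lt (lt_of_lt_of_le hi (time_mono hstar hMa _ _ ht₀ ht.le))
    have h2 : Mb (xb i) (xb i) t = 1 := (hMb.km2 _ _).mpr rfl t ht0
    have hterm : 1 - δ ≤ D p (xb i) t := by
      refine le_trans ?_ (DD_term_le p (xb i) t i)
      rw [h2, hstar.one _ (hMa.range _ _ _ ht0.le)]; exact h1
    have hMct : star (1 - δ) (1 - δ) ≤ MS (Sum.inl p) (Sum.inr (xb i)) t := by
      show star (1 - δ) (1 - δ) ≤ Mc p (xb i) t
      rw [hMc_eqD p (xb i) t ht]
      exact hstar.mono _ _ _ _ h1δ h1δ (DD_mem hstar hMa hMb p (xb i) ht0.le) h1δ hterm le_rfl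
    exact le_trans hMct (le_ciSup (hsupbdd p) (xb i))
  have hside2 : star (1 - δ) (1 - δ) ≤ ⨅ q : Xb, ⨆ p : Xa, MS (Sum.inl p) (Sum.inr q) t := by
    refine le_ciInf fun q => ?_
    obtain ⟨i, hi⟩ := hnb q
    have h1 : 1 - δ ≤ Mb (xb i) q t := by
      rw [← hMb.km3 q (xb i) t]
      exact le_of_lt (lt_of_lt_of_le hi (time_mono hstar hMb _ _ ht₀ ht.le))
    have h2 : Ma (xa i) (xa i) t = 1 := (hMa.km2 _ _).mpr rfl t ht0
    have hterm : 1 - δ ≤ D (xa i) q t := by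
      refine le_trans ?_ (DD_term_le (xa i) q t i)
      rw [h2, one_star hstar (hMb.range _ _ _ ht0.le)]; exact h1
    have hMct : star (1 - δ) (1 - δ) ≤ MS (Sum.inl (xa i)) (Sum.inr q) t := by
      show star (1 - δ) (1 - δ) ≤ Mc (xa i) q t
      rw [hMc_eqD (xa i) q t ht]
      exact hstar.mono _ _ _ _ h1δ h1δ (DD_mem hstar hMa hMb (xa i) q ht0.le) h1δ hterm le_rfl
    exact le_trans hMct (le_ciSup (hsupbdd' q) (xa i))
  have hfuzzy : star (1 - δ) (1 - δ) ≤ fuzzyH MS t := by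
    unfold fuzzyH; exact le_min hside1 hside2
  have hbdd : BddAbove ((fun M => fuzzyH M t) '' {M | IsAdmissible star Ma Mb M}) := by
    refine ⟨1, ?_⟩
    rintro _ ⟨M', hM', rfl⟩
    have hr := hM'.1.range
    have hub : ∀ p : Xa, (⨆ q : Xb, M' (Sum.inl p) (Sum.inr q) t) ≤ 1 :=
      fun p => ciSup_le fun q => (hr _ _ t ht0.le).2
    have hlb : BddBelow (Set.range fun p : Xa => ⨆ q : Xb, M' (Sum.inl p) (Sum.inr q) t) := by
      refine ⟨0, ?_⟩; rintro _ ⟨p, rfl⟩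
      refine le_trans (hr (Sum.inl p) (Sum.inr (Classical.arbitrary Xb)) t ht0.le).1 ?_
      exact le_ciSup (⟨1, by rintro _ ⟨q, rfl⟩; exact (hr _ _ t ht0.le).2⟩ :
        BddAbove (Set.range fun q : Xb => M' (Sum.inl p) (Sum.inr q) t)) _
    refine le_trans (min_le_left _ _) ?_
    exact le_trans (ciInf_le hlb (Classical.arbitrary Xa)) (hub _)
  exact le_trans hfuzzy (le_csSup hbdd ⟨MS, hadm, rfl⟩)

end FuzzyAux


universe u

/-- Corollary to Theorem `th:main1`: a sequence of nonempty compact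
non-Archimedean fuzzy metric spaces satisfying (1)-(4) has a Cauchy subsequence with
respect to the non-Archimedean Gromov-Hausdorff fuzzy distance. -/
theorem fuzzy_precompactness_cauchy (star : ℝ → ℝ → ℝ) (hstar : IsContinuousTNorm star)
    (X : ℕ → Type u) [∀ n, TopologicalSpace (X n)] [∀ n, CompactSpace (X n)]
    [∀ n, Nonempty (X n)]
    (M : ∀ n, X n → X n → ℝ → ℝ)
    (hM : ∀ n, IsNAFuzzyMetric star (M n)) (hcomp : ∀ n, FuzzyCompatible (M n))
    -- (1) the t-norm satisfies (TN1)
    (htn1 : TN1 star)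
    -- (2) a nondecreasing left-continuous lower bound for all the `s`-diameters
    (C : ℝ → ℝ) (hCmono : MonotoneOn C (Ioi 0))
    (hClc : ∀ s, 0 < s → ContinuousWithinAt C (Iio s) s)
    (hC : ∀ s, 0 < s → 0 < C s ∧ C s ≤ 1 ∧ ∀ n, C s ≤ fuzzyDiam (M n) s)
    -- (3) a uniform bound on the cover numbers
    (N : ℝ → ℝ → ℕ)
    (hcov : ∀ ε t : ℝ, 0 < t → 0 < ε → ε < 1 → ∀ n, CovLE (M n) ε t (N ε t))
    -- (4) compatible `(t,ε)`-nets
    (hnets : ∀ t ε : ℝ, 0 < t → 0 < ε → ε < 1 →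
      ∃ x : ∀ n, Fin (N ε t) → X n,
        (∀ n, ∀ p : X n, ∃ i, 1 - ε < M n p (x n i) t) ∧
        (∀ n m, ∀ s, t < s → ∀ i j,
          M n (x n i) (x n j) s < M m (x m i) (x m j) s →
          M n (x n i) (x n j) t / star (M m (x m i) (x m j) t) (1 - ε) ≤
            M n (x n i) (x n j) s / star (M m (x m i) (x m j) s) (1 - ε))) :
    ∃ φ : ℕ → ℕ, StrictMono φ ∧
      ∀ t ε : ℝ, 0 < t → 0 < ε → ε < 1 →
        ∃ k0 : ℕ, ∀ j k, k0 ≤ j → k0 ≤ k →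
          1 - ε < MGH star (M (φ j)) (M (φ k)) t := by
    classical
  have hdiam : ∀ n (p q : X n) (s : ℝ), 0 < s → C s ≤ M n p q s := by
    intro n p q s hs
    refine le_trans ((hC s hs).2.2 n) ?_
    have hbb : BddBelow (Set.range fun pr : X n × X n => M n pr.1 pr.2 s) :=
      ⟨0, by rintro _ ⟨pr, rfl⟩; exact ((hM n).range _ _ s hs.le).1⟩
    exact ciInf_le hbb (p, q)
  have hCmem : ∀ s, 0 < s → C s ∈ Icc (0:ℝ) 1 := fun s hs => ⟨(hC s hs).1.le, (hC s hs).2.1⟩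
  set t₀f : ℕ → ℝ := fun a => 1 / (a + 1) with ht₀f
  set δf : ℕ → ℝ := fun b => 1 / (b + 2) with hδf
  have ht₀pos : ∀ a, 0 < t₀f a := fun a => by simp only [ht₀f]; positivity
  have hδpos : ∀ b, 0 < δf b := fun b => by simp only [hδf]; positivity
  have hδlt1 : ∀ b, δf b < 1 := fun b => by
    simp only [hδf]; rw [div_lt_one (by positivity)]
    have : (0:ℝ) ≤ (b : ℝ) := Nat.cast_nonneg b
    linarith
  have hnet : ∀ ab : ℕ × ℕ, ∃ x : ∀ n, Fin (N (δf ab.2) (t₀f ab.1)) → X n,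
      (∀ n, ∀ p : X n, ∃ i, 1 - δf ab.2 < M n p (x n i) (t₀f ab.1)) ∧
      (∀ n m, ∀ s, t₀f ab.1 < s → ∀ i j,
        M n (x n i) (x n j) s < M m (x m i) (x m j) s →
        M n (x n i) (x n j) (t₀f ab.1) / star (M m (x m i) (x m j) (t₀f ab.1)) (1 - δf ab.2) ≤
          M n (x n i) (x n j) s / star (M m (x m i) (x m j) s) (1 - δf ab.2)) :=
    fun ab => hnets (t₀f ab.1) (δf ab.2) (ht₀pos ab.1) (hδpos ab.2) (hδlt1 ab.2)
  choose xx hxx1 hxx2 using hnet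
  haveI : CompactSpace (Icc (0:ℝ) 1) := isCompact_iff_compactSpace.mp isCompact_Icc
  obtain ⟨L, -, φ, hφ, hconv⟩ := IsCompact.tendsto_subseq
    (s := (univ : Set (∀ ab : ℕ × ℕ,
      (Fin (N (δf ab.2) (t₀f ab.1)) × Fin (N (δf ab.2) (t₀f ab.1))) → Icc (0:ℝ) 1)))
    (x := fun n ab ij =>
      ⟨M n (xx ab n ij.1) (xx ab n ij.2) (t₀f ab.1), (hM n).range _ _ _ (ht₀pos ab.1).le⟩)
    isCompact_univ (fun n => mem_univ _)
  refine ⟨φ, hφ, ?_⟩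
  intro t ε htpos hε0 hε1
  obtain ⟨a, ha⟩ := exists_nat_one_div_lt htpos
  have ht₀pos' : 0 < t₀f a := ht₀pos a
  have hat : t₀f a < t := by simpa [ht₀f] using ha
  have hCt₀pos : 0 < C (t₀f a) := (hC _ ht₀pos').1
  obtain ⟨b, hb1, hb2⟩ : ∃ b, 1 - ε < star (1 - δf b) (1 - δf b) ∧
      0 < star (C (t₀f a)) (1 - δf b) := by
    have hone : (1:ℝ) ∈ Icc (0:ℝ) 1 := ⟨zero_le_one, le_rfl⟩
    have hδ0 : Tendsto δf atTop (nhds 0) := by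
      have h1 := (tendsto_one_div_add_atTop_nhds_zero_nat (𝕜 := ℝ)).comp (tendsto_add_atTop_nat 1)
      have heq : (fun n : ℕ => 1 / ((n + 1 : ℕ) + 1 : ℝ)) = δf := by
        funext n; simp only [hδf]; push_cast; ring_nf
      rwa [show ((fun n : ℕ => 1 / (n + 1 : ℝ)) ∘ fun n => n + 1) =
        (fun n : ℕ => 1 / ((n + 1 : ℕ) + 1 : ℝ)) from rfl, heq] at h1
    have h1m : Tendsto (fun b => 1 - δf b) atTop (nhds 1) := by
      simpa using hδ0.const_sub 1
    have hmem : ∀ᶠ b in atTop (α := ℕ), (1 - δf b) ∈ Icc (0:ℝ) 1 :=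
      Eventually.of_forall fun b => ⟨by linarith [hδlt1 b], by linarith [hδpos b]⟩
    have hs1 : Tendsto (fun b => star (1 - δf b) (1 - δf b)) atTop (nhds (star 1 1)) :=
      FuzzyAux.tendsto_star hstar hone hone h1m h1m hmem hmem
    rw [hstar.one 1 hone] at hs1
    have hs2 : Tendsto (fun b => star (C (t₀f a)) (1 - δf b)) atTop
        (nhds (star (C (t₀f a)) 1)) :=
      FuzzyAux.tendsto_star hstar (hCmem _ ht₀pos') hone tendsto_const_nhds h1m
        (Eventually.of_forall fun _ => hCmem _ ht₀pos') hmem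
    rw [hstar.one _ (hCmem _ ht₀pos')] at hs2
    have e1 : ∀ᶠ b in atTop, 1 - ε < star (1 - δf b) (1 - δf b) :=
      hs1.eventually (eventually_gt_nhds (by linarith))
    have e2 : ∀ᶠ b in atTop, 0 < star (C (t₀f a)) (1 - δf b) :=
      hs2.eventually (eventually_gt_nhds hCt₀pos)
    obtain ⟨b, hb⟩ := (e1.and e2).exists
    exact ⟨b, hb.1, hb.2⟩
  have hδmem : (1 - δf b) ∈ Icc (0:ℝ) 1 := ⟨by linarith [hδlt1 b], by linarith [hδpos b]⟩
  -- coordinate convergence at (a,b)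
  have hcoord : ∀ ij : Fin (N (δf b) (t₀f a)) × Fin (N (δf b) (t₀f a)),
      Tendsto (fun k => M (φ k) (xx (a,b) (φ k) ij.1) (xx (a,b) (φ k) ij.2) (t₀f a))
        atTop (nhds ((L (a,b) ij : ℝ))) := by
    intro ij
    have h1 := tendsto_pi_nhds.mp (tendsto_pi_nhds.mp hconv (a,b)) ij
    exact (continuous_subtype_val.tendsto _).comp h1
  have hLmem : ∀ ij, ((L (a,b) ij : ℝ)) ∈ Icc (0:ℝ) 1 := fun ij => (L (a,b) ij).2
  have hLlb : ∀ ij, C (t₀f a) ≤ ((L (a,b) ij : ℝ)) := fun ij =>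
    ge_of_tendsto (hcoord ij) (Eventually.of_forall fun k => hdiam (φ k) _ _ _ ht₀pos')
  have hev : ∀ᶠ k in atTop, ∀ ij : Fin (N (δf b) (t₀f a)) × Fin (N (δf b) (t₀f a)),
      star (M (φ k) (xx (a,b) (φ k) ij.1) (xx (a,b) (φ k) ij.2) (t₀f a)) (1 - δf b) <
        (((L (a,b) ij : ℝ)) + star ((L (a,b) ij : ℝ)) (1 - δf b)) / 2 ∧
      (((L (a,b) ij : ℝ)) + star ((L (a,b) ij : ℝ)) (1 - δf b)) / 2 <
        M (φ k) (xx (a,b) (φ k) ij.1) (xx (a,b) (φ k) ij.2) (t₀f a) := by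
    rw [eventually_all]
    intro ij
    have hstrict : star ((L (a,b) ij : ℝ)) (1 - δf b) < ((L (a,b) ij : ℝ)) :=
      FuzzyAux.tn1_strict hstar htn1 (lt_of_lt_of_le hCt₀pos (hLlb ij)) (hLmem ij).2
        (by linarith [hδlt1 b]) (by linarith [hδpos b])
    have ht1 : Tendsto (fun k => star
        (M (φ k) (xx (a,b) (φ k) ij.1) (xx (a,b) (φ k) ij.2) (t₀f a)) (1 - δf b)) atTop
        (nhds (star ((L (a,b) ij : ℝ)) (1 - δf b))) :=
      FuzzyAux.tendsto_star hstar (hLmem ij) hδmem (hcoord ij) tendsto_const_nhds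
        (Eventually.of_forall fun k => (hM (φ k)).range _ _ _ ht₀pos'.le)
        (Eventually.of_forall fun _ => hδmem)
    refine (ht1.eventually (eventually_lt_nhds (by linarith))).and
      ((hcoord ij).eventually (eventually_gt_nhds (by linarith)))
  obtain ⟨k0, hk0⟩ := eventually_atTop.mp hev
  refine ⟨k0, ?_⟩
  intro j k hj hk
  have hclose : ∀ (u v : ℕ), k0 ≤ u → k0 ≤ v →
      ∀ i i' : Fin (N (δf b) (t₀f a)),
      star (M (φ v) (xx (a,b) (φ v) i) (xx (a,b) (φ v) i') (t₀f a)) (1 - δf b) ≤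
        M (φ u) (xx (a,b) (φ u) i) (xx (a,b) (φ u) i') (t₀f a) := by
    intro u v hu hv i i'
    exact le_of_lt (lt_trans ((hk0 v hv (i, i')).1) ((hk0 u hu (i, i')).2))
  have hprop : ∀ (u v : ℕ), k0 ≤ u → k0 ≤ v → ∀ s, t₀f a ≤ s →
      ∀ i i' : Fin (N (δf b) (t₀f a)),
      star (M (φ v) (xx (a,b) (φ v) i) (xx (a,b) (φ v) i') s) (1 - δf b) ≤
        M (φ u) (xx (a,b) (φ u) i) (xx (a,b) (φ u) i') s := by
    intro u v hu hv s hs i i'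
    rcases eq_or_lt_of_le hs with rfl | hlt
    · exact hclose u v hu hv i i'
    have hspos : 0 < s := ht₀pos'.trans hlt
    rcases lt_or_ge (M (φ u) (xx (a,b) (φ u) i) (xx (a,b) (φ u) i') s)
      (M (φ v) (xx (a,b) (φ v) i) (xx (a,b) (φ v) i') s) with hltAB | hge
    · have hr := hxx2 (a,b) (φ u) (φ v) s hlt i i' hltAB
      have hden : 0 < star (M (φ v) (xx (a,b) (φ v) i) (xx (a,b) (φ v) i') (t₀f a))
          (1 - δf b) := by
        refine lt_of_lt_of_le hb2 (hstar.mono _ _ _ _ (hCmem _ ht₀pos') hδmem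
          ((hM (φ v)).range _ _ _ ht₀pos'.le) hδmem ?_ le_rfl)
        exact hdiam (φ v) _ _ _ ht₀pos'
      have h1 : (1:ℝ) ≤ M (φ u) (xx (a,b) (φ u) i) (xx (a,b) (φ u) i') (t₀f a) /
          star (M (φ v) (xx (a,b) (φ v) i) (xx (a,b) (φ v) i') (t₀f a)) (1 - δf b) :=
        (one_le_div hden).mpr (hclose u v hu hv i i')
      have h2 := le_trans h1 hr
      rcases lt_or_ge 0 (star (M (φ v) (xx (a,b) (φ v) i) (xx (a,b) (φ v) i') s) (1 - δf b))
        with hq | hq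
      · exact (one_le_div hq).mp h2
      · exact le_trans hq (((hM (φ u)).range _ _ s hspos.le).1)
    · exact le_trans (FuzzyAux.star_le_left hstar
        ((hM (φ v)).range _ _ s hspos.le) hδmem) hge
  have hkey := FuzzyAux.key_construction hstar (hM (φ j)) (hM (φ k)) hCmono hClc hCmem
    (fun p q s hs => hdiam (φ j) p q s hs) (fun p q s hs => hdiam (φ k) p q s hs)
    ht₀pos' (hδpos b) (hδlt1 b)
    (hxx1 (a,b) (φ j)) (hxx1 (a,b) (φ k))
    (fun u hu i i' => hprop j k hj hk u hu i i')
    (fun u hu i i' => hprop k j hk hj u hu i i')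
    hat
  exact lt_of_lt_of_le hb1 hkey
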